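/- Fix λ > 0. Then f has a logarithmic singularity at the endpoint −λ²s of its cut: there exist δ, C > 0 such that for all z with 0 < |z + λ²s| < δ and z ∉ (−∞, −λ²s], | f(z;λ) − ((λ²s)^{α} e^{−2/s^{k}}/(2πi)) · Log(z + λ²s) | ≤ C, where Log denotes the principal branch of the logarithm with cut (−∞, −λ²s] (i.e., Log(z+λ²s) with arg(z+λ²s) ∈ (−π, π)). -/

import Mathlib

open Complex Set MeasureTheory

/-- The Cauchy-type integral
`f(z;λ) = (e^{−z}/(2πi)) ∫_{−∞}^{−λ²s} |x|^α e^x e^{2(−1)^{k+1} λ^{2k}/x^k} (x−z)^{−1} dx`. -/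
noncomputable def fFun (k : ℕ) (α s : ℝ) (lam : ℝ) (z : ℂ) : ℂ :=
  (Complex.exp (-z) / (2 * Real.pi * Complex.I)) *
    ∫ x in Iic (-(lam ^ 2 * s)),
      ((|x| ^ α : ℝ) : ℂ) * Complex.exp (x : ℂ) *
        Complex.exp (2 * (-1 : ℂ) ^ (k + 1) * ((lam ^ (2 * k) : ℝ) : ℂ) * (x : ℂ) ^ (-(k : ℤ)))
        / ((x : ℂ) - z)

/-- The numerator of the integrand. -/
noncomputable def GcAux (k : ℕ) (α lam : ℝ) (x : ℝ) : ℂ :=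
  ((|x| ^ α : ℝ) : ℂ) * Complex.exp (x : ℂ) *
    Complex.exp (2 * (-1 : ℂ) ^ (k + 1) * ((lam ^ (2 * k) : ℝ) : ℂ) * (x : ℂ) ^ (-(k : ℤ)))

lemma neg_one_pow_mul_zpow_neg (k : ℕ) {x : ℝ} (hx : x < 0) :
    (-1 : ℝ) ^ (k + 1) * x ^ (-(k : ℤ)) = -(|x| ^ k)⁻¹ := by
  rw [zpow_neg, zpow_natCast, abs_of_neg hx]
  have h2 : ((-x) ^ k : ℝ) = (-1) ^ k * x ^ k := by rw [neg_pow]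
  have h4 : ((-1 : ℝ) ^ k)⁻¹ = (-1) ^ k := by
    rcases Nat.even_or_odd k with h | h
    · rw [h.neg_one_pow]; norm_num
    · rw [h.neg_one_pow]; norm_num
  rw [h2, mul_inv, h4, pow_succ]
  ring

lemma GcAux_eq (k : ℕ) (α lam : ℝ) {x : ℝ} (hx : x < 0) :
    GcAux k α lam x =
      ((|x| ^ α * Real.exp (x - 2 * lam ^ (2 * k) / |x| ^ k) : ℝ) : ℂ) := by
  unfold GcAux
  have h1 : (2 * (-1 : ℂ) ^ (k + 1) * ((lam ^ (2 * k) : ℝ) : ℂ) * (x : ℂ) ^ (-(k : ℤ)))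
      = (((- (2 * lam ^ (2 * k) / |x| ^ k)) : ℝ) : ℂ) := by
    have hc : ((x : ℂ)) ^ (-(k : ℤ)) = ((x ^ (-(k : ℤ)) : ℝ) : ℂ) := by
      push_cast; ring
    have hm : (-1 : ℂ) ^ (k + 1) = (((-1 : ℝ) ^ (k + 1) : ℝ) : ℂ) := by push_cast; ring
    rw [hc, hm]
    rw [show (2 : ℂ) * ((((-1 : ℝ) ^ (k + 1) : ℝ)) : ℂ) * ((lam ^ (2 * k) : ℝ) : ℂ) *
        ((x ^ (-(k : ℤ)) : ℝ) : ℂ)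
        = (((2 * ((-1 : ℝ) ^ (k + 1) * x ^ (-(k : ℤ))) * lam ^ (2 * k) : ℝ)) : ℂ) by
      push_cast; ring]
    rw [neg_one_pow_mul_zpow_neg k hx]
    congr 1
    rw [div_eq_mul_inv]
    ring
  rw [h1, ← Complex.ofReal_exp, ← Complex.ofReal_exp]
  norm_cast
  rw [mul_assoc, ← Real.exp_add, ← sub_eq_add_neg]

lemma GcAux_abs_le (k : ℕ) (α lam : ℝ) {x : ℝ} (hx : x < 0) :
    ‖GcAux k α lam x‖ ≤ |x| ^ α * Real.exp x := by
  rw [GcAux_eq k α lam hx, Complex.norm_real, Real.norm_eq_abs]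
  have h0 : (0:ℝ) ≤ 2 * lam ^ (2 * k) / |x| ^ k := by
    rw [pow_mul]; positivity
  have h1 : Real.exp (x - 2 * lam ^ (2 * k) / |x| ^ k) ≤ Real.exp x :=
    Real.exp_le_exp.2 (by linarith)
  have h2 : (0:ℝ) ≤ |x| ^ α := Real.rpow_nonneg (abs_nonneg x) α
  rw [_root_.abs_of_nonneg (mul_nonneg h2 (Real.exp_pos _).le)]
  exact mul_le_mul_of_nonneg_left h1 h2

lemma GcAux_contDiffOn (k : ℕ) (α lam : ℝ) :
    ContDiffOn ℝ 1 (GcAux k α lam) (Iio (0:ℝ)) := by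
  intro x hx
  have hx' : x < 0 := hx
  apply ContDiffAt.contDiffWithinAt
  have h1 : ContDiffAt ℝ 1 (fun y : ℝ => ((|y| ^ α : ℝ) : ℂ)) x := by
    have e1 : ContDiffAt ℝ 1 (fun y : ℝ => ((-y) ^ α : ℝ)) x :=
      (Real.contDiffAt_rpow_const_of_ne (by linarith : -x ≠ 0)).comp x
        (contDiff_neg.contDiffAt)
    have e2 : (fun y : ℝ => (|y| ^ α : ℝ)) =ᶠ[nhds x] (fun y => ((-y) ^ α : ℝ)) := by
      filter_upwards [Iio_mem_nhds hx'] with y hy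
      rw [abs_of_neg hy]
    exact Complex.ofRealCLM.contDiff.contDiffAt.comp x (e1.congr_of_eventuallyEq e2)
  have h2 : ContDiffAt ℝ 1 (fun y : ℝ => Complex.exp (y : ℂ)) x :=
    (Complex.contDiff_exp.comp Complex.ofRealCLM.contDiff).contDiffAt
  have h3 : ContDiffAt ℝ 1 (fun y : ℝ =>
      Complex.exp (2 * (-1 : ℂ) ^ (k + 1) * ((lam ^ (2 * k) : ℝ) : ℂ) * (y : ℂ) ^ (-(k : ℤ)))) x := by
    have e1 : ContDiffAt ℝ 1 (fun y : ℝ =>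
        Complex.exp (2 * (-1 : ℂ) ^ (k + 1) * ((lam ^ (2 * k) : ℝ) : ℂ) * ((y : ℂ) ^ k)⁻¹)) x := by
      apply Complex.contDiff_exp.contDiffAt.comp x
      apply ContDiffAt.mul contDiffAt_const
      apply ContDiffAt.inv
      · exact (Complex.ofRealCLM.contDiff.contDiffAt).pow k
      · exact pow_ne_zero k (by exact_mod_cast hx'.ne)
    have e2 : (fun y : ℝ =>
        Complex.exp (2 * (-1 : ℂ) ^ (k + 1) * ((lam ^ (2 * k) : ℝ) : ℂ) * (y : ℂ) ^ (-(k : ℤ))))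
        =ᶠ[nhds x] (fun y : ℝ =>
        Complex.exp (2 * (-1 : ℂ) ^ (k + 1) * ((lam ^ (2 * k) : ℝ) : ℂ) * ((y : ℂ) ^ k)⁻¹)) := by
      filter_upwards [Iio_mem_nhds hx'] with y hy
      rw [zpow_neg, zpow_natCast]
    exact e1.congr_of_eventuallyEq e2
  exact (h1.mul h2).mul h3

lemma g0_integrableOn {α a : ℝ} (hα : -1 < α) (ha : 0 < a) :
    IntegrableOn (fun x : ℝ => |x| ^ α * Real.exp x) (Iic (-a)) := by
  have A : MeasurableEmbedding fun x : ℝ => -x :=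
    (Homeomorph.neg ℝ).measurableEmbedding
  have base : IntegrableOn (fun y : ℝ => Real.exp (-y) * y ^ (α + 1 - 1)) (Ioi (0:ℝ)) :=
    Real.GammaIntegral_convergent (by linarith)
  have base2 : IntegrableOn (fun y : ℝ => |(-y)| ^ α * Real.exp (-y)) (Ici a) := by
    apply IntegrableOn.congr_fun (f := fun y : ℝ => Real.exp (-y) * y ^ (α + 1 - 1))
    · exact base.mono_set (fun y hy => lt_of_lt_of_le ha hy)
    · intro y hy
      have hy0 : 0 < y := lt_of_lt_of_le ha hy
      show Real.exp (-y) * y ^ (α + 1 - 1) = |(-y)| ^ α * Real.exp (-y)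
      rw [abs_neg, _root_.abs_of_pos hy0, add_sub_cancel_right]
      ring
    · exact measurableSet_Ici
  rw [IntegrableOn, ← Measure.map_neg_eq_self (volume : Measure ℝ), ← IntegrableOn,
    A.integrableOn_map_iff]
  simpa [Function.comp_def, neg_preimage, neg_Iic, neg_neg] using base2

lemma integral_inv_sub_eval (z : ℂ) (a : ℝ)
    (hmem : ∀ x ∈ Set.uIcc (-a-1) (-a), z - (x:ℂ) ∈ Complex.slitPlane)
    (hne : ∀ x ∈ Set.uIcc (-a-1) (-a), (x:ℂ) - z ≠ 0) :
    ∫ x in (-a-1)..(-a), ((x:ℂ) - z)⁻¹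
      = Complex.log (z + a) - Complex.log (z + a + 1) := by
  have hder : ∀ x ∈ Set.uIcc (-a-1) (-a),
      HasDerivAt (fun y : ℝ => Complex.log (z - (y:ℂ))) (((x:ℂ) - z)⁻¹) x := by
    intro x hx
    have h0 : HasDerivAt (fun t : ℂ => z - t) (-1) (x:ℂ) := (hasDerivAt_id _).const_sub z
    have h2 : HasDerivAt (fun y : ℝ => Complex.log (z - (y:ℂ))) ((z - (x:ℂ))⁻¹ * -1) x :=
      ((Complex.hasDerivAt_log (hmem x hx)).comp ((x:ℂ)) h0).comp_ofReal
    have h3 : ((x:ℂ) - z)⁻¹ = (z - (x:ℂ))⁻¹ * -1 := by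
      rw [show ((x:ℂ) - z) = -(z - (x:ℂ)) by ring, inv_neg]; ring
    rw [h3]; exact h2
  have hint : IntervalIntegrable (fun x : ℝ => ((x:ℂ) - z)⁻¹) volume (-a-1) (-a) := by
    apply ContinuousOn.intervalIntegrable
    exact (Complex.continuous_ofReal.continuousOn.sub continuousOn_const).inv₀ hne
  have hres := intervalIntegral.integral_eq_sub_of_hasDerivAt hder hint
  rw [hres]
  have e1 : z - (((-a : ℝ)):ℂ) = z + a := by push_cast; ring
  have e2 : z - (((-a-1 : ℝ)):ℂ) = z + a + 1 := by push_cast; ring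
  rw [e1, e2]

set_option maxHeartbeats 2000000 in
lemma main_est (k : ℕ) (α lam a L I₀ : ℝ) (ha : 0 < a) (hα : -1 < α) (hL0 : 0 ≤ L)
    (hlip : ∀ x ∈ Icc (-a-1) (-a), ∀ y ∈ Icc (-a-1) (-a),
      ‖GcAux k α lam y - GcAux k α lam x‖ ≤ L * |y - x|)
    (hI₀ : I₀ = ∫ x in Iic (-a), |x| ^ α * Real.exp x)
    (z : ℂ) (hw0 : 0 < ‖z + (a:ℂ)‖)
    (hw1 : ‖z + (a:ℂ)‖ < 1/2)
    (hw2 : ¬((z + (a:ℂ)).im = 0 ∧ (z + (a:ℂ)).re ≤ 0)) :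
    ‖(Complex.exp (-z) * ∫ x in Iic (-a), GcAux k α lam x / ((x:ℂ) - z))
        - (Complex.exp ((a:ℂ)) * GcAux k α lam (-a)) * Complex.log (z + (a:ℂ))‖
      ≤ Real.exp (a+1) * (2*I₀ + L + L*(2+2*Real.pi)
          + ‖GcAux k α lam (-a)‖*(1+Real.pi))
        + 2*(Real.exp a * ‖GcAux k α lam (-a)‖)*(1+Real.pi) := by
  have hg0int : IntegrableOn (fun x : ℝ => |x| ^ α * Real.exp x) (Iic (-a)) :=
    g0_integrableOn hα ha
  set w : ℂ := z + (a:ℂ) with hw_def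
  clear_value w
  set g₀ : ℝ := ‖GcAux k α lam (-a)‖ with hg₀_def
  clear_value g₀
  set r : ℝ := ‖w‖ with hr_def
  clear_value r
  have hr0 : 0 < r := hw0
  have hr1 : r < 1/2 := hw1
  -- basic real/imaginary bookkeeping
  have hwre : w.re = z.re + a := by simp [hw_def]
  have hwim : w.im = z.im := by simp [hw_def]
  have habs_re : |w.re| ≤ r := by rw [hr_def]; exact Complex.abs_re_le_norm w
  have hzre_lb : -a - 1/2 ≤ z.re := by
    have := abs_le.1 habs_re
    nlinarith [this.1]
  have hzre_ub : z.re ≤ -a + 1/2 := by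
    have := abs_le.1 habs_re
    nlinarith [this.2]
  have hfar : ∀ x : ℝ, x ≤ -a-1 → (1:ℝ)/2 ≤ ‖(x:ℂ) - z‖ := by
    intro x hx1
    have h2 : ((x:ℂ) - z).re = x - z.re := by simp
    have h3 : |((x:ℂ) - z).re| ≤ ‖(x:ℂ) - z‖ := Complex.abs_re_le_norm _
    have h4 : |z.re - x| = z.re - x := _root_.abs_of_nonneg (by linarith)
    rw [h2, abs_sub_comm, h4] at h3
    linarith
  have hg0nonneg : ∀ x : ℝ, 0 ≤ |x| ^ α * Real.exp x :=
    fun x => mul_nonneg (Real.rpow_nonneg (abs_nonneg x) α) (Real.exp_pos x).le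
  have hptI1 : ∀ x ∈ Iic (-a-1),
      ‖GcAux k α lam x / ((x:ℂ) - z)‖ ≤ 2*(|x| ^ α * Real.exp x) := by
    intro x hx
    have hx1 : x ≤ -a - 1 := mem_Iic.mp hx
    have hx0 : x < 0 := by linarith
    have hd : (1:ℝ)/2 ≤ ‖(x:ℂ) - z‖ := hfar x hx1
    calc ‖GcAux k α lam x / ((x:ℂ) - z)‖
        = ‖GcAux k α lam x‖ / ‖(x:ℂ) - z‖ := by
          rw [norm_div]
      _ ≤ (|x| ^ α * Real.exp x) / (1/2) :=
          div_le_div₀ (hg0nonneg x) (GcAux_abs_le k α lam hx0) (by norm_num) hd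
      _ = 2*(|x| ^ α * Real.exp x) := by ring
  -- uniform separation from the cut
  set eps : ℝ := if w.im = 0 then w.re else |w.im| with heps_def
  clear_value eps
  have heps : 0 < eps := by
    rw [heps_def]; split_ifs with him
    · rcases not_and.mp hw2 him with h
      exact lt_of_not_ge h
    · exact abs_pos.2 him
  have heps_le : ∀ x : ℝ, x ≤ -a → eps ≤ ‖(x:ℂ) - z‖ := by
    intro x hx
    rw [heps_def]; split_ifs with him
    · have hre : 0 < w.re := lt_of_not_ge (not_and.mp hw2 him)
      have h1 : ((x:ℂ) - z).re = x - z.re := by simp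
      have h2 : |((x:ℂ) - z).re| ≤ ‖(x:ℂ) - z‖ := Complex.abs_re_le_norm _
      rw [h1, abs_sub_comm, _root_.abs_of_nonneg (by nlinarith)] at h2
      linarith
    · have h1 : ((x:ℂ) - z).im = -z.im := by simp
      have h2 : |((x:ℂ) - z).im| ≤ ‖(x:ℂ) - z‖ := Complex.abs_im_le_norm _
      rw [h1, abs_neg, ← hwim] at h2
      exact h2
  have hne : ∀ x : ℝ, x ≤ -a → ((x:ℂ) - z) ≠ 0 := by
    intro x hx hc
    have := heps_le x hx
    rw [hc] at this
    simp only [norm_zero] at this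
    linarith
  have habspos : ∀ x : ℝ, x ≤ -a → 0 < ‖(x:ℂ) - z‖ :=
    fun x hx => lt_of_lt_of_le heps (heps_le x hx)
  -- the projection point t
  set t : ℝ := min z.re (-a) with ht_def
  clear_value t
  have ht_mem : t ∈ Icc (-a-1) (-a) := by
    constructor
    · rw [ht_def]; rcases le_total z.re (-a) with h | h
      · rw [min_eq_left h]; linarith
      · rw [min_eq_right h]; linarith
    · rw [ht_def]; exact min_le_right _ _
  have ht_le : ∀ x : ℝ, x ≤ -a → |x - t| ≤ ‖(x:ℂ) - z‖ := by
    intro x hx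
    have h1 : |x - t| ≤ |x - z.re| := by
      rw [ht_def]; rcases le_total z.re (-a) with h | h
      · rw [min_eq_left h]
      · rw [min_eq_right h]
        rw [abs_of_nonpos (by linarith), abs_of_nonpos (by linarith)]
        linarith
    have h2 : ((x:ℂ) - z).re = x - z.re := by simp
    have h3 : |((x:ℂ) - z).re| ≤ ‖(x:ℂ) - z‖ := Complex.abs_re_le_norm _
    rw [h2] at h3
    linarith
  have htw : |t + a| ≤ r := by
    have h1 : t + a = min w.re 0 := by
      rw [ht_def, hwre]
      rcases le_total z.re (-a) with h | h
      · rw [min_eq_left h, min_eq_left (by linarith)]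
      · rw [min_eq_right h, min_eq_right (by linarith)]; ring
    rw [h1]
    rcases le_total w.re 0 with h | h
    · rw [min_eq_left h]; exact habs_re
    · rw [min_eq_right h]; simp [hr0.le]
  have htJ : -a - 1 ≤ t ∧ t ≤ -a := ⟨ht_mem.1, ht_mem.2⟩
  -- continuity & integrability
  have hIicsub : Iic (-a) ⊆ Iio (0:ℝ) :=
    fun x hx => mem_Iio.mpr (lt_of_le_of_lt (mem_Iic.mp hx) (by linarith))
  have hGcont : ContinuousOn (GcAux k α lam) (Iic (-a)) :=
    ((GcAux_contDiffOn k α lam).continuousOn).mono hIicsub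
  have hfrac_cont : ContinuousOn (fun x : ℝ => GcAux k α lam x / ((x:ℂ) - z)) (Iic (-a)) :=
    hGcont.div (Complex.continuous_ofReal.continuousOn.sub continuousOn_const)
      (fun x hx => hne x hx)
  have hInt1 : IntegrableOn (fun x : ℝ => GcAux k α lam x / ((x:ℂ) - z)) (Iic (-a)) := by
    apply Integrable.mono' (hg0int.const_mul eps⁻¹)
      (hfrac_cont.aestronglyMeasurable measurableSet_Iic)
    rw [ae_restrict_iff' measurableSet_Iic]
    apply ae_of_all
    intro x hx
    have hx' : x < 0 := hIicsub hx
    calc ‖GcAux k α lam x / ((x:ℂ) - z)‖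
        = ‖GcAux k α lam x‖ / ‖(x:ℂ) - z‖ := by
          rw [norm_div]
      _ ≤ (|x| ^ α * Real.exp x) / eps :=
          div_le_div₀ (hg0nonneg x) (GcAux_abs_le k α lam hx') heps (heps_le x hx)
      _ = eps⁻¹ * (|x| ^ α * Real.exp x) := by rw [div_eq_inv_mul]
  have hsub1 : Iic (-a-1) ⊆ Iic (-a) := Iic_subset_Iic.mpr (by linarith)
  have hsub2 : Ioc (-a-1) (-a) ⊆ Iic (-a) := Ioc_subset_Iic_self
  have hIntJ : IntegrableOn (fun x : ℝ => GcAux k α lam x / ((x:ℂ) - z)) (Ioc (-a-1) (-a)) :=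
    hInt1.mono_set hsub2
  have hInv : IntegrableOn (fun x : ℝ => ((x:ℂ) - z)⁻¹) (Ioc (-a-1) (-a)) := by
    apply ContinuousOn.integrableOn_compact isCompact_Icc
      ((Complex.continuous_ofReal.continuousOn.sub continuousOn_const).inv₀
        (fun x hx => hne x hx.2)) |>.mono_set Ioc_subset_Icc_self
  -- splitting of the integral
  set I1 : ℂ := ∫ x in Iic (-a-1), GcAux k α lam x / ((x:ℂ) - z) with hI1_def
  set B : ℂ := ∫ x in Ioc (-a-1) (-a), (GcAux k α lam x - GcAux k α lam t) / ((x:ℂ) - z)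
    with hB_def
  clear_value I1 B
  have hBint : IntegrableOn
      (fun x : ℝ => (GcAux k α lam x - GcAux k α lam t) / ((x:ℂ) - z)) (Ioc (-a-1) (-a)) := by
    have e2 : (fun x : ℝ => (GcAux k α lam x - GcAux k α lam t) / ((x:ℂ) - z))
        = fun x : ℝ => GcAux k α lam x / ((x:ℂ) - z) - GcAux k α lam t * ((x:ℂ) - z)⁻¹ :=
      funext fun x => by ring
    rw [e2]
    exact hIntJ.sub (hInv.const_mul _)
  -- FTC evaluation of the model integral
  have huIcc : Set.uIcc (-a-1) (-a) = Icc (-a-1) (-a) := uIcc_of_le (by linarith)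
  have hmem : ∀ x ∈ Set.uIcc (-a-1) (-a), z - (x:ℂ) ∈ Complex.slitPlane := by
    intro x hx
    rw [huIcc] at hx
    rw [Complex.mem_slitPlane_iff]
    by_cases him : w.im = 0
    · left
      have hre : 0 < w.re := by
        rcases not_and.mp hw2 him with h
        exact lt_of_not_ge h
      have : (z - (x:ℂ)).re = z.re - x := by simp
      rw [this]
      nlinarith [hx.2]
    · right
      have : (z - (x:ℂ)).im = z.im := by simp
      rw [this, ← hwim]
      exact him
  have hFTC : ∫ x in Ioc (-a-1) (-a), ((x:ℂ) - z)⁻¹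
      = Complex.log w - Complex.log (w + 1) := by
    rw [← intervalIntegral.integral_of_le (by linarith : -a-1 ≤ -a)]
    rw [integral_inv_sub_eval z a hmem (fun x hx => hne x (by rw [huIcc] at hx; exact hx.2))]
    rw [hw_def]
  -- the decomposition of the full integral
  have hI_split : (∫ x in Iic (-a), GcAux k α lam x / ((x:ℂ) - z))
      = I1 + (B + GcAux k α lam t * (Complex.log w - Complex.log (w + 1))) := by
    have hunion : Iic (-a-1) ∪ Ioc (-a-1) (-a) = Iic (-a) := Iic_union_Ioc_eq_Iic (by linarith)
    rw [← hunion, setIntegral_union (Iic_disjoint_Ioc le_rfl) measurableSet_Ioc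
      (hInt1.mono_set hsub1) hIntJ]
    rw [hI1_def]
    congr 1
    have e : ∀ x : ℝ, GcAux k α lam x / ((x:ℂ) - z)
        = (GcAux k α lam x - GcAux k α lam t) / ((x:ℂ) - z)
          + GcAux k α lam t * ((x:ℂ) - z)⁻¹ := by
      intro x; ring
    rw [show (fun x : ℝ => GcAux k α lam x / ((x:ℂ) - z))
        = fun x : ℝ => (GcAux k α lam x - GcAux k α lam t) / ((x:ℂ) - z)
          + GcAux k α lam t * ((x:ℂ) - z)⁻¹ from funext e]
    rw [integral_add hBint (hInv.const_mul _), MeasureTheory.integral_const_mul, hFTC, hB_def]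
  -- scalar estimates
  have hpi := Real.pi_pos
  have hloglt : Real.log r < 0 := Real.log_neg hr0 (by linarith)
  have e8 : (0:ℝ) ≤ -Real.log r := by linarith
  have e4 : ‖Complex.log w‖ ≤ -Real.log r + Real.pi := by
    have h0 : ‖Complex.log w‖
        ≤ |(Complex.log w).re| + |(Complex.log w).im| := Complex.norm_le_abs_re_add_abs_im _
    have h1 : |(Complex.log w).re| = -Real.log r := by
      rw [Complex.log_re, ← hr_def, _root_.abs_of_neg hloglt]
    have h2 : |(Complex.log w).im| ≤ Real.pi := by
      rw [Complex.log_im]; exact Complex.abs_arg_le_pi w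
    linarith
  have e5 : r * (-Real.log r) ≤ 1 := by
    have h1 : Real.log r⁻¹ ≤ r⁻¹ - 1 := Real.log_le_sub_one_of_pos (inv_pos.2 hr0)
    rw [Real.log_inv] at h1
    have h2 : r * (-Real.log r) ≤ r * (r⁻¹ - 1) := mul_le_mul_of_nonneg_left h1 hr0.le
    rw [mul_sub, mul_inv_cancel₀ hr0.ne'] at h2
    nlinarith
  have hub : ‖w + 1‖ ≤ 3/2 := by
    calc ‖w + 1‖ ≤ ‖w‖ + ‖1‖ := norm_add_le _ _
      _ ≤ 3/2 := by rw [norm_one]; rw [← hr_def]; linarith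
  have hlb : 1/2 ≤ ‖w + 1‖ := by
    have h1 : ‖(w + 1) + (-w)‖ ≤ ‖w + 1‖ + ‖-w‖ :=
      norm_add_le _ _
    have h2 : (w + 1) + (-w) = 1 := by ring
    rw [h2, norm_one, norm_neg, ← hr_def] at h1
    linarith
  have e6 : ‖Complex.log (w+1)‖ ≤ 1 + Real.pi := by
    have hlogabs : |Real.log (‖w+1‖)| ≤ 1 := by
      rcases le_total 1 (‖w+1‖) with h | h
      · rw [_root_.abs_of_nonneg (Real.log_nonneg h)]
        have := Real.log_le_sub_one_of_pos (by linarith : (0:ℝ) < ‖w+1‖)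
        linarith
      · have hu0 : (0:ℝ) < ‖w+1‖ := by linarith
        have h1 : Real.log (‖w+1‖)⁻¹ ≤ (‖w+1‖)⁻¹ - 1 :=
          Real.log_le_sub_one_of_pos (inv_pos.2 hu0)
        rw [Real.log_inv] at h1
        have hui : (‖w+1‖)⁻¹ ≤ 2 := by
          rw [show (2:ℝ) = (1/2:ℝ)⁻¹ by norm_num]
          exact inv_anti₀ (by norm_num) hlb
        have hlog_le0 : Real.log (‖w+1‖) ≤ 0 := Real.log_nonpos hu0.le h
        rw [abs_of_nonpos hlog_le0]
        linarith
    have h0 : ‖Complex.log (w+1)‖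
        ≤ |(Complex.log (w+1)).re| + |(Complex.log (w+1)).im| :=
      Complex.norm_le_abs_re_add_abs_im _
    have h2 : |(Complex.log (w+1)).im| ≤ Real.pi := by
      rw [Complex.log_im]; exact Complex.abs_arg_le_pi _
    rw [Complex.log_re] at h0
    linarith
  have e7 : ‖Complex.exp (-w) - 1‖ ≤ 2*r := by
    have h := Complex.norm_exp_sub_one_le (x := -w) (by rw [norm_neg, ← hr_def]; linarith)
    rwa [norm_neg, ← hr_def] at h
  have eE : ‖Complex.exp (-z)‖ ≤ Real.exp (a+1) := by
    rw [Complex.norm_exp]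
    apply Real.exp_le_exp.2
    have h0 : (-z).re = -z.re := by simp
    rw [h0]; linarith
  have hE0 : (0:ℝ) ≤ Real.exp (a+1) := (Real.exp_pos _).le
  have hg₀0 : (0:ℝ) ≤ g₀ := by rw [hg₀_def]; exact norm_nonneg _
  -- I1 estimate
  have hI1b : ‖I1‖ ≤ 2 * I₀ := by
    have step1 : ‖I1‖ ≤ ∫ x in Iic (-a-1), ‖GcAux k α lam x / ((x:ℂ) - z)‖ := by
      rw [hI1_def]; exact norm_integral_le_integral_norm _
    have step2 : (∫ x in Iic (-a-1), ‖GcAux k α lam x / ((x:ℂ) - z)‖)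
        ≤ ∫ x in Iic (-a-1), 2*(|x| ^ α * Real.exp x) := by
      exact setIntegral_mono_on ((hInt1.mono_set hsub1).norm)
        ((hg0int.mono_set hsub1).const_mul 2) measurableSet_Iic hptI1
    have step3 : (∫ x in Iic (-a-1), 2*(|x| ^ α * Real.exp x))
        = 2 * ∫ x in Iic (-a-1), |x| ^ α * Real.exp x := MeasureTheory.integral_const_mul 2 _
    have step4 : (∫ x in Iic (-a-1), |x| ^ α * Real.exp x) ≤ I₀ := by
      rw [hI₀]
      exact setIntegral_mono_set hg0int (ae_of_all _ hg0nonneg)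
        (HasSubset.Subset.eventuallyLE hsub1)
    calc ‖I1‖ = ‖I1‖ := rfl
      _ ≤ ∫ x in Iic (-a-1), ‖GcAux k α lam x / ((x:ℂ) - z)‖ := step1
      _ ≤ ∫ x in Iic (-a-1), 2*(|x| ^ α * Real.exp x) := step2
      _ = 2 * ∫ x in Iic (-a-1), |x| ^ α * Real.exp x := step3
      _ ≤ 2 * I₀ := by linarith
  -- B estimate
  have hBb : ‖B‖ ≤ L := by
    have hvol : (volume (Ioc (-a-1) (-a))).toReal = 1 := by
      rw [Real.volume_Ioc, show (-a) - (-a-1) = (1:ℝ) by ring, ENNReal.toReal_ofReal zero_le_one]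
    have hpt : ∀ x ∈ Ioc (-a-1) (-a),
        ‖(GcAux k α lam x - GcAux k α lam t) / ((x:ℂ) - z)‖ ≤ L := by
      intro x hx
      have hx2 : x ≤ -a := hx.2
      have hxJ : x ∈ Icc (-a-1) (-a) := ⟨hx.1.le, hx.2⟩
      rw [norm_div, div_le_iff₀ (habspos x hx2)]
      calc ‖GcAux k α lam x - GcAux k α lam t‖ ≤ L * |x - t| :=
          hlip t ht_mem x hxJ
        _ ≤ L * ‖(x:ℂ) - z‖ := mul_le_mul_of_nonneg_left (ht_le x hx2) hL0
    have h := norm_setIntegral_le_of_norm_le_const (μ := volume)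
      (s := Ioc (-a-1) (-a)) (C := L) measure_Ioc_lt_top hpt
    rw [measureReal_def, hvol, mul_one] at h
    rw [hB_def]
    exact h
  -- Lipschitz estimate at the endpoint
  have e3 : ‖GcAux k α lam t - GcAux k α lam (-a)‖ ≤ L * r := by
    have h1 := hlip (-a) ⟨by linarith, le_refl _⟩ t ht_mem
    have h2 : |t - (-a)| = |t + a| := by rw [sub_neg_eq_add]
    rw [h2] at h1
    calc ‖GcAux k α lam t - GcAux k α lam (-a)‖ ≤ L * |t + a| := h1
      _ ≤ L * r := mul_le_mul_of_nonneg_left htw hL0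
  -- assembly
  have hcabs : ‖Complex.exp ((a:ℂ)) * GcAux k α lam (-a)‖ = Real.exp a * g₀ := by
    rw [norm_mul, Complex.norm_exp, ← hg₀_def]
    norm_num
  have hexp_split : Complex.exp (-z) = Complex.exp ((a:ℂ)) * Complex.exp (-w) := by
    rw [← Complex.exp_add]; congr 1; rw [hw_def]; ring
  have key : (Complex.exp (-z) * ∫ x in Iic (-a), GcAux k α lam x / ((x:ℂ) - z))
        - (Complex.exp ((a:ℂ)) * GcAux k α lam (-a)) * Complex.log w
      = Complex.exp (-z) * I1 + Complex.exp (-z) * B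
        + Complex.exp (-z) * (GcAux k α lam t - GcAux k α lam (-a))
            * (Complex.log w - Complex.log (w+1))
        + (-(Complex.exp (-z) * GcAux k α lam (-a) * Complex.log (w+1)))
        + (Complex.exp ((a:ℂ)) * GcAux k α lam (-a))
            * (Complex.exp (-w) - 1) * Complex.log w := by
    rw [hI_split, hexp_split]; ring
  -- term bounds
  have b1 : ‖Complex.exp (-z) * I1‖ ≤ Real.exp (a+1) * (2*I₀) := by
    rw [norm_mul]
    exact mul_le_mul eE hI1b (norm_nonneg _) hE0
  have b2 : ‖Complex.exp (-z) * B‖ ≤ Real.exp (a+1) * L := by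
    rw [norm_mul]
    exact mul_le_mul eE hBb (norm_nonneg _) hE0
  have hsublog : ‖Complex.log w - Complex.log (w+1)‖
      ≤ (-Real.log r + Real.pi) + (1+Real.pi) := by
    have h := norm_add_le (Complex.log w) (-(Complex.log (w+1)))
    rw [norm_neg, ← sub_eq_add_neg] at h
    exact h.trans (add_le_add e4 e6)
  have b3 : ‖Complex.exp (-z) * (GcAux k α lam t - GcAux k α lam (-a))
        * (Complex.log w - Complex.log (w+1))‖
      ≤ Real.exp (a+1) * (L*(2+2*Real.pi)) := by
    rw [norm_mul, norm_mul]
    have h1 : ‖Complex.exp (-z)‖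
          * ‖GcAux k α lam t - GcAux k α lam (-a)‖
          * ‖Complex.log w - Complex.log (w+1)‖
        ≤ (Real.exp (a+1) * (L*r)) * ((-Real.log r + Real.pi) + (1+Real.pi)) := by
      apply mul_le_mul (mul_le_mul eE e3 (norm_nonneg _) hE0) hsublog
        (norm_nonneg _)
      exact mul_nonneg hE0 (mul_nonneg hL0 hr0.le)
    have h2 : (Real.exp (a+1) * (L*r)) * ((-Real.log r + Real.pi) + (1+Real.pi))
        ≤ Real.exp (a+1) * (L*(2+2*Real.pi)) := by
      rw [mul_assoc]
      apply mul_le_mul_of_nonneg_left _ hE0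
      nlinarith [mul_le_mul_of_nonneg_left e5 hL0,
        mul_nonneg (mul_nonneg hL0 hpi.le) (by linarith : (0:ℝ) ≤ 1/2 - r),
        mul_nonneg hL0 (by linarith : (0:ℝ) ≤ 1/2 - r)]
    linarith
  have b4 : ‖-(Complex.exp (-z) * GcAux k α lam (-a) * Complex.log (w+1))‖
      ≤ Real.exp (a+1) * (g₀*(1+Real.pi)) := by
    rw [norm_neg, norm_mul, norm_mul, ← hg₀_def]
    have h1 : ‖Complex.exp (-z)‖ * g₀ * ‖Complex.log (w+1)‖
        ≤ (Real.exp (a+1) * g₀) * (1+Real.pi) := by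
      apply mul_le_mul (mul_le_mul_of_nonneg_right eE hg₀0) e6 (norm_nonneg _)
        (mul_nonneg hE0 hg₀0)
    calc ‖Complex.exp (-z)‖ * g₀ * ‖Complex.log (w+1)‖
        ≤ (Real.exp (a+1) * g₀) * (1+Real.pi) := h1
      _ = Real.exp (a+1) * (g₀*(1+Real.pi)) := by ring
  have b5 : ‖(Complex.exp ((a:ℂ)) * GcAux k α lam (-a))
        * (Complex.exp (-w) - 1) * Complex.log w‖
      ≤ 2*(Real.exp a * g₀)*(1+Real.pi) := by
    rw [norm_mul, norm_mul, hcabs]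
    have hX0 : (0:ℝ) ≤ Real.exp a * g₀ := mul_nonneg (Real.exp_pos a).le hg₀0
    have h1 : (Real.exp a * g₀) * ‖Complex.exp (-w) - 1‖
          * ‖Complex.log w‖
        ≤ ((Real.exp a * g₀) * (2*r)) * (-Real.log r + Real.pi) := by
      apply mul_le_mul (mul_le_mul_of_nonneg_left e7 hX0) e4 (norm_nonneg _)
      exact mul_nonneg hX0 (by linarith)
    have h2 : ((Real.exp a * g₀) * (2*r)) * (-Real.log r + Real.pi)
        ≤ 2*(Real.exp a * g₀)*(1+Real.pi) := by
      nlinarith [mul_le_mul_of_nonneg_left e5 hX0,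
        mul_nonneg (mul_nonneg hX0 hpi.le) (by linarith : (0:ℝ) ≤ 1/2 - r),
        mul_nonneg hX0 (by linarith : (0:ℝ) ≤ 1/2 - r)]
    linarith
  -- triangle inequality and conclusion
  rw [key]
  have t4 := norm_add_le
    (Complex.exp (-z) * I1 + Complex.exp (-z) * B
      + Complex.exp (-z) * (GcAux k α lam t - GcAux k α lam (-a))
          * (Complex.log w - Complex.log (w+1))
      + (-(Complex.exp (-z) * GcAux k α lam (-a) * Complex.log (w+1))))
    ((Complex.exp ((a:ℂ)) * GcAux k α lam (-a)) * (Complex.exp (-w) - 1) * Complex.log w)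
  have t3 := norm_add_le
    (Complex.exp (-z) * I1 + Complex.exp (-z) * B
      + Complex.exp (-z) * (GcAux k α lam t - GcAux k α lam (-a))
          * (Complex.log w - Complex.log (w+1)))
    (-(Complex.exp (-z) * GcAux k α lam (-a) * Complex.log (w+1)))
  have t2 := norm_add_le
    (Complex.exp (-z) * I1 + Complex.exp (-z) * B)
    (Complex.exp (-z) * (GcAux k α lam t - GcAux k α lam (-a))
      * (Complex.log w - Complex.log (w+1)))
  have t1 := norm_add_le (Complex.exp (-z) * I1) (Complex.exp (-z) * B)
  have hring : Real.exp (a+1) * (2*I₀ + L + L*(2+2*Real.pi) + g₀*(1+Real.pi))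
      = Real.exp (a+1) * (2*I₀) + Real.exp (a+1) * L
        + Real.exp (a+1) * (L*(2+2*Real.pi)) + Real.exp (a+1) * (g₀*(1+Real.pi)) := by ring
  linarith

/-- Logarithmic singularity of `f(·;λ)` at the endpoint `−λ²s`:
`f(z;λ) = ((λ²s)^α e^{−2/s^k}/(2πi)) Log(z+λ²s) + O(1)` as `z → −λ²s` off the cut. -/
theorem fFun_log_singularity_at_endpoint (k : ℕ) (hk : 1 ≤ k) (α s : ℝ)
    (hα : -1 < α) (hs : 0 < s) (lam : ℝ) (hlam : 0 < lam) :
    ∃ δ > (0 : ℝ), ∃ C > (0 : ℝ), ∀ z : ℂ,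
      0 < ‖z + (lam ^ 2 * s : ℝ)‖ →
      ‖z + (lam ^ 2 * s : ℝ)‖ < δ →
      ¬((z + (lam ^ 2 * s : ℝ)).im = 0 ∧ (z + (lam ^ 2 * s : ℝ)).re ≤ 0) →
      ‖fFun k α s lam z -
          ((((lam ^ 2 * s) ^ α * Real.exp (-(2 / s ^ k)) : ℝ)) : ℂ)
            / (2 * Real.pi * Complex.I) * Complex.log (z + (lam ^ 2 * s : ℝ))‖
        ≤ C := by
  have ha : (0:ℝ) < lam ^ 2 * s := by positivity
  have hpi := Real.pi_pos
  -- Lipschitz constant for GcAux on [-a-1, -a]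
  have hGcd := GcAux_contDiffOn k α lam
  have hJo : Icc (-(lam ^ 2 * s)-1) (-(lam ^ 2 * s)) ⊆ Iio (0:ℝ) := fun x hx =>
    mem_Iio.mpr (lt_of_le_of_lt hx.2 (by linarith))
  have hdercont : ContinuousOn (deriv (GcAux k α lam)) (Iio (0:ℝ)) :=
    hGcd.continuousOn_deriv_of_isOpen isOpen_Iio le_rfl
  obtain ⟨M, hM⟩ := (isCompact_Icc (a := -(lam ^ 2 * s)-1)
    (b := -(lam ^ 2 * s))).exists_bound_of_continuousOn (hdercont.mono hJo)
  have hL0 : (0:ℝ) ≤ max M 0 := le_max_right _ _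
  have hlip : ∀ x ∈ Icc (-(lam ^ 2 * s)-1) (-(lam ^ 2 * s)),
      ∀ y ∈ Icc (-(lam ^ 2 * s)-1) (-(lam ^ 2 * s)),
      ‖GcAux k α lam y - GcAux k α lam x‖ ≤ (max M 0) * |y - x| := by
    intro x hx y hy
    have hder : ∀ u ∈ Icc (-(lam ^ 2 * s)-1) (-(lam ^ 2 * s)),
        HasDerivWithinAt (GcAux k α lam) (deriv (GcAux k α lam) u)
          (Icc (-(lam ^ 2 * s)-1) (-(lam ^ 2 * s))) u := fun u hu =>
      (((hGcd.differentiableOn one_ne_zero).differentiableAt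
        (isOpen_Iio.mem_nhds (hJo hu))).hasDerivAt).hasDerivWithinAt
    have hbd : ∀ u ∈ Icc (-(lam ^ 2 * s)-1) (-(lam ^ 2 * s)),
        ‖deriv (GcAux k α lam) u‖ ≤ max M 0 := fun u hu => (hM u hu).trans (le_max_left _ _)
    have h := Convex.norm_image_sub_le_of_norm_hasDerivWithin_le hder hbd
      (convex_Icc _ _) hx hy
    simpa [Real.norm_eq_abs] using h
  have hI₀nonneg : (0:ℝ) ≤ ∫ x in Iic (-(lam ^ 2 * s)), |x| ^ α * Real.exp x :=
    setIntegral_nonneg measurableSet_Iic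
      (fun x _ => mul_nonneg (Real.rpow_nonneg (abs_nonneg x) α) (Real.exp_pos x).le)
  have hg₀0 : (0:ℝ) ≤ ‖GcAux k α lam (-(lam ^ 2 * s))‖ := norm_nonneg _
  refine ⟨1/2, by norm_num,
    Real.exp (lam ^ 2 * s + 1) * (2*(∫ x in Iic (-(lam ^ 2 * s)), |x| ^ α * Real.exp x)
        + (max M 0) + (max M 0)*(2+2*Real.pi)
        + ‖GcAux k α lam (-(lam ^ 2 * s))‖*(1+Real.pi))
      + 2*(Real.exp (lam ^ 2 * s) * ‖GcAux k α lam (-(lam ^ 2 * s))‖)*(1+Real.pi)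
      + 1, ?_, ?_⟩
  · have hE0 : (0:ℝ) ≤ Real.exp (lam ^ 2 * s + 1) := (Real.exp_pos _).le
    have h1 : (0:ℝ) ≤ (max M 0)*(2+2*Real.pi) := mul_nonneg hL0 (by linarith)
    have h2 : (0:ℝ) ≤ ‖GcAux k α lam (-(lam ^ 2 * s))‖*(1+Real.pi) :=
      mul_nonneg hg₀0 (by linarith)
    have h3 : (0:ℝ) ≤ Real.exp (lam ^ 2 * s + 1)
        * (2*(∫ x in Iic (-(lam ^ 2 * s)), |x| ^ α * Real.exp x)
          + (max M 0) + (max M 0)*(2+2*Real.pi)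
          + ‖GcAux k α lam (-(lam ^ 2 * s))‖*(1+Real.pi)) :=
      mul_nonneg hE0 (by linarith)
    have h4 : (0:ℝ) ≤ 2*(Real.exp (lam ^ 2 * s)
        * ‖GcAux k α lam (-(lam ^ 2 * s))‖)*(1+Real.pi) :=
      mul_nonneg (mul_nonneg (by norm_num) (mul_nonneg (Real.exp_pos _).le hg₀0))
        (by linarith)
    linarith
  · intro z h0 h1 h2
    have hmain := main_est k α lam (lam ^ 2 * s) (max M 0)
      (∫ x in Iic (-(lam ^ 2 * s)), |x| ^ α * Real.exp x) ha hα hL0 hlip rfl z h0 h1 h2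
    -- identify the coefficient
    have hc0 : ((((lam ^ 2 * s) ^ α * Real.exp (-(2 / s ^ k)) : ℝ)) : ℂ)
        = Complex.exp (((lam ^ 2 * s : ℝ)):ℂ) * GcAux k α lam (-(lam ^ 2 * s)) := by
      rw [GcAux_eq k α lam (show -(lam ^ 2 * s) < 0 by linarith)]
      rw [abs_neg, _root_.abs_of_pos ha]
      have hq : 2 * lam ^ (2*k) / (lam ^ 2 * s) ^ k = 2 / s ^ k := by
        rw [mul_pow, ← pow_mul]
        have hlk : lam ^ (2*k) ≠ 0 := pow_ne_zero _ (ne_of_gt hlam)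
        have hsk : s ^ k ≠ 0 := pow_ne_zero _ (ne_of_gt hs)
        field_simp
      rw [hq]
      rw [← Complex.ofReal_exp, ← Complex.ofReal_mul]
      norm_cast
      have hx : Real.exp (lam ^ 2 * s) * Real.exp (-(lam ^ 2 * s) - 2 / s ^ k)
          = Real.exp (-(2 / s ^ k)) := by
        rw [← Real.exp_add]; congr 1; ring
      rw [← hx]; ring
    have hfFun : fFun k α s lam z = Complex.exp (-z) / (2 * (Real.pi:ℂ) * Complex.I)
        * ∫ x in Iic (-(lam ^ 2 * s)), GcAux k α lam x / ((x:ℂ) - z) := rfl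
    rw [hfFun, hc0]
    have halg : Complex.exp (-z) / (2 * (Real.pi:ℂ) * Complex.I)
          * (∫ x in Iic (-(lam ^ 2 * s)), GcAux k α lam x / ((x:ℂ) - z))
        - (Complex.exp (((lam ^ 2 * s : ℝ)):ℂ) * GcAux k α lam (-(lam ^ 2 * s)))
            / (2 * (Real.pi:ℂ) * Complex.I) * Complex.log (z + ((lam ^ 2 * s : ℝ):ℂ))
        = ((Complex.exp (-z) * ∫ x in Iic (-(lam ^ 2 * s)), GcAux k α lam x / ((x:ℂ) - z))
            - (Complex.exp (((lam ^ 2 * s : ℝ)):ℂ) * GcAux k α lam (-(lam ^ 2 * s)))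
                * Complex.log (z + ((lam ^ 2 * s : ℝ):ℂ)))
          / (2 * (Real.pi:ℂ) * Complex.I) := by
      ring
    rw [halg, norm_div]
    have habs2pi : ‖2 * (Real.pi:ℂ) * Complex.I‖ = 2 * Real.pi := by
      rw [norm_mul, norm_mul, Complex.norm_two, Complex.norm_I, Complex.norm_real, Real.norm_eq_abs,
        _root_.abs_of_pos Real.pi_pos, mul_one]
    rw [habs2pi]
    have h2pi : (1:ℝ) ≤ 2 * Real.pi := by nlinarith [Real.pi_gt_three]
    have hds := div_le_self (norm_nonneg
      ((Complex.exp (-z) * ∫ x in Iic (-(lam ^ 2 * s)), GcAux k α lam x / ((x:ℂ) - z))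
        - (Complex.exp (((lam ^ 2 * s : ℝ)):ℂ) * GcAux k α lam (-(lam ^ 2 * s)))
            * Complex.log (z + ((lam ^ 2 * s : ℝ):ℂ)))) h2pi
    linarith
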